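/- Let φ : K^1 → ℂ be a valuation on compact intervals of ℝ (i.e. φ([a,b]∪[b,c]) + φ({b}) = φ([a,b]) + φ([b,c]) for a ≤ b ≤ c) that is continuous and polynomial of degree at most ℓ, meaning x ↦ φ([a+x, b+x]) is a polynomial of degree at most ℓ for each fixed interval [a,b]. Then there exist polynomials P, Q of degree at most ℓ+1 such that φ([a,b]) = P(a) + Q(b) for all a ≤ b. -/

import Mathlib

open Polynomial

private lemma delta_surj : ∀ (n : ℕ) (d : Polynomial ℂ), d.natDegree ≤ n →
    ∃ q : Polynomial ℂ, q.natDegree ≤ n + 1 ∧ q.comp (X + C 1) - q = d := by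
  intro n
  induction n with
  | zero =>
    intro d hd
    refine ⟨C (d.coeff 0) * X, le_trans (natDegree_C_mul_le _ _) (by simp), ?_⟩
    conv_rhs => rw [eq_C_of_natDegree_le_zero hd]
    simp [mul_comp, mul_add]
  | succ n ih =>
    intro d hd
    set a : ℂ := d.coeff (n+1) / ((n : ℂ)+2) with ha
    set q₀ : Polynomial ℂ := C a * X ^ (n+2) with hq₀
    have hΔ : q₀.comp (X + C 1) - q₀ = C a * ((X + 1)^(n+2) - X^(n+2)) := by
      simp [hq₀, mul_comp, pow_comp, mul_sub]
    set d' : Polynomial ℂ := d - (q₀.comp (X + C 1) - q₀) with hd'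
    have hn2 : ((n:ℂ) + 2) ≠ 0 := by
      have : ((n:ℂ) + 2) = ((n+2 : ℕ) : ℂ) := by push_cast; ring
      rw [this]
      exact_mod_cast Nat.succ_ne_zero (n+1)
    have hdeg' : d'.natDegree ≤ n := by
      rw [natDegree_le_iff_coeff_eq_zero]
      intro m hm
      rw [hd', hΔ, coeff_sub, coeff_C_mul, coeff_sub, coeff_X_add_one_pow, coeff_X_pow]
      rcases eq_or_lt_of_le (Nat.succ_le_of_lt hm) with h1 | h1
      · subst h1
        have hch : (n+2).choose (n+1) = n + 2 := Nat.choose_succ_self_right (n+1)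
        rw [if_neg (by omega), hch, ha]
        push_cast
        field_simp
        ring
      · have hz : d.coeff m = 0 := coeff_eq_zero_of_natDegree_lt (lt_of_le_of_lt hd h1)
        rcases eq_or_lt_of_le (Nat.succ_le_of_lt h1) with h2 | h2
        · subst h2
          rw [if_pos rfl, Nat.choose_self, hz]
          simp
        · rw [if_neg (by omega), Nat.choose_eq_zero_of_lt h2, hz]
          simp
    obtain ⟨q₁, hq₁deg, hq₁⟩ := ih d' hdeg'
    refine ⟨q₁ + q₀, ?_, ?_⟩
    · refine le_trans (natDegree_add_le _ _) (max_le (le_trans hq₁deg (by omega)) ?_)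
      exact le_trans (natDegree_C_mul_le _ _) (by simp)
    · have h3 : (q₁ + q₀).comp (X + C 1) - (q₁ + q₀)
          = (q₁.comp (X + C 1) - q₁) + (q₀.comp (X + C 1) - q₀) := by
        rw [add_comp]; ring
      rw [h3, hq₁, hd']; ring

private lemma eval_const_of_periodic (u : Polynomial ℂ) 
    (hper : ∀ y : ℝ, u.eval ((y:ℂ) + 1) = u.eval (y:ℂ)) :
    ∀ x y : ℝ, u.eval (x:ℂ) = u.eval (y:ℂ) := by
  have hv : u.comp (X + C 1) - u = 0 := by
    apply Polynomial.eq_zero_of_infinite_isRoot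
    refine Set.Infinite.mono ?_ (Set.infinite_range_of_injective Complex.ofReal_injective)
    rintro z ⟨y, rfl⟩
    simp [IsRoot, eval_comp, hper y]
  have hshift : ∀ z : ℂ, u.eval (z + 1) = u.eval z := by
    intro z
    have := congrArg (eval z) hv
    simpa [eval_comp, sub_eq_zero] using this
  have hn : ∀ n : ℕ, u.eval (n : ℂ) = u.eval 0 := by
    intro n
    induction n with
    | zero => simp
    | succ k ihk => push_cast; rw [hshift, ihk]
  have hw : u - C (u.eval 0) = 0 := by
    apply Polynomial.eq_zero_of_infinite_isRoot
    refine Set.Infinite.mono ?_ (Set.infinite_range_of_injective (Nat.cast_injective (R := ℂ)))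
    rintro z ⟨n, rfl⟩
    simp [IsRoot, hn n]
  have hu : u = C (u.eval 0) := by rwa [sub_eq_zero] at hw
  intro x y
  rw [hu]; simp
theorem stmt0 (ℓ : ℕ) (φ : ℝ → ℝ → ℂ)
    (hval : ∀ a b c : ℝ, a ≤ b → b ≤ c → φ a c + φ b b = φ a b + φ b c)
    (hcont : Continuous fun p : ℝ × ℝ => φ p.1 p.2)
    (hpoly : ∀ a b : ℝ, a ≤ b → ∃ T : Polynomial ℂ, T.natDegree ≤ ℓ ∧
      ∀ x : ℝ, φ (a + x) (b + x) = T.eval (x : ℂ)) :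
    ∃ P Q : Polynomial ℂ, P.natDegree ≤ ℓ + 1 ∧ Q.natDegree ≤ ℓ + 1 ∧
      ∀ a b : ℝ, a ≤ b → φ a b = P.eval (a : ℂ) + Q.eval (b : ℂ) := by
  classical
  obtain ⟨T₀, hT₀deg, hT₀⟩ := hpoly 0 0 le_rfl
  have hf : ∀ x : ℝ, φ x x = T₀.eval (x : ℂ) := fun x => by simpa using hT₀ x
  obtain ⟨p1, hp1deg, hp1⟩ := hpoly 0 1 zero_le_one
  have hp1' : ∀ x : ℝ, φ x (x + 1) = p1.eval (x : ℂ) := by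
    intro x
    have := hp1 x
    rwa [zero_add, add_comm (1:ℝ) x] at this
  set d : Polynomial ℂ := p1 - T₀.comp (X + C 1) with hdd
  have hddeg : d.natDegree ≤ ℓ := by
    refine le_trans (natDegree_sub_le _ _) (max_le hp1deg ?_)
    rw [natDegree_comp, natDegree_X_add_C, mul_one]
    exact hT₀deg
  obtain ⟨q, hqdeg, hq⟩ := delta_surj ℓ d hddeg
  set G : ℝ → ℂ := fun x => if 0 ≤ x then φ 0 x - φ x x else φ 0 0 - φ x 0 with hGdef
  -- key valuation identity
  have hGψ : ∀ a b : ℝ, a ≤ b → φ a b - φ b b = G b - G a := by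
    intro a b hab
    by_cases ha : 0 ≤ a
    · have hb : 0 ≤ b := le_trans ha hab
      have h1 := hval 0 a b ha hab
      simp only [hGdef, if_pos ha, if_pos hb]
      linear_combination -h1
    · by_cases hb : 0 ≤ b
      · have h1 := hval a 0 b (le_of_not_ge ha) hb
        simp only [hGdef, if_pos hb, if_neg ha]
        linear_combination h1
      · have h1 := hval a b 0 hab (le_of_not_ge hb)
        simp only [hGdef, if_neg ha, if_neg hb]
        linear_combination -h1
  -- continuity of G
  have hc1 : Continuous fun x : ℝ => φ 0 x :=
    hcont.comp (continuous_const.prodMk continuous_id)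
  have hc2 : Continuous fun x : ℝ => φ x x :=
    hcont.comp (continuous_id.prodMk continuous_id)
  have hc3 : Continuous fun x : ℝ => φ x 0 :=
    hcont.comp (continuous_id.prodMk continuous_const)
  have hGcont : Continuous G := by
    rw [hGdef]
    apply Continuous.if_le (hc1.sub hc2) (continuous_const.sub hc3)
      continuous_const continuous_id
    intro x hx
    subst hx
    simp
  set R : ℝ → ℂ := fun x => G x - q.eval (x : ℂ) with hRdef
  have hRcont : Continuous R :=
    hGcont.sub ((q.continuous_aeval).comp Complex.continuous_ofReal)
  have hdq : ∀ z : ℂ, q.eval (z + 1) - q.eval z = d.eval z := by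
    intro z
    have := congrArg (eval z) hq
    simpa [eval_comp] using this
  have hRper : ∀ x : ℝ, R (x + 1) = R x := by
    intro x
    have h1 : φ x (x+1) - φ (x+1) (x+1) = G (x+1) - G x :=
      hGψ x (x+1) (by linarith)
    have h2 := hdq (x : ℂ)
    have h3 : d.eval (x:ℂ) = p1.eval (x:ℂ) - T₀.eval ((x:ℂ)+1) := by
      rw [hdd]; simp [eval_comp]
    rw [hp1' x, hf (x+1)] at h1
    simp only [hRdef]
    push_cast at h1 ⊢
    rw [h3] at h2
    linear_combination -h1 - h2
  -- step function is constant in x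
  have hRstep : ∀ h : ℝ, 0 ≤ h → ∀ x : ℝ, R (x + h) - R x = R h - R 0 := by
    intro h hh
    obtain ⟨T, hTdeg, hT⟩ := hpoly 0 h hh
    have hT' : ∀ x : ℝ, φ x (x + h) = T.eval (x : ℂ) := by
      intro x
      have := hT x
      rwa [zero_add, add_comm h x] at this
    set u : Polynomial ℂ :=
      T - T₀.comp (X + C (h:ℂ)) - (q.comp (X + C (h:ℂ)) - q) with hu
    have hueval : ∀ y : ℝ, R (y + h) - R y = u.eval (y : ℂ) := by
      intro y
      have h1 : φ y (y+h) - φ (y+h) (y+h) = G (y+h) - G y :=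
        hGψ y (y+h) (by linarith)
      rw [hT' y, hf (y+h)] at h1
      simp only [hRdef, hu]
      simp only [eval_sub, eval_comp, eval_add, eval_X, eval_C]
      push_cast at h1 ⊢
      linear_combination -h1
    have hper : ∀ y : ℝ, u.eval ((y:ℂ) + 1) = u.eval (y:ℂ) := by
      intro y
      have e1 := hueval (y + 1)
      have e2 := hueval y
      have harg : y + 1 + h = (y + h) + 1 := by ring
      rw [harg, hRper (y+h), hRper y] at e1
      push_cast at e1
      rw [← e2]
      exact e1.symm
    have hconst := eval_const_of_periodic u hper
    intro x
    have e0 := hueval 0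
    rw [zero_add] at e0
    rw [hueval x, hconst x 0, ← e0]
  -- additivity of R - R 0
  have hRadd : ∀ x y : ℝ, R (x + y) = R x + R y - R 0 := by
    intro x y
    by_cases hy : 0 ≤ y
    · have := hRstep y hy x
      linear_combination this
    · have hy' : 0 ≤ -y := by linarith
      have h1 := hRstep (-y) hy' (x + y)
      have h2 := hRstep (-y) hy' y
      rw [show x + y + -y = x by ring] at h1
      rw [show y + -y = (0:ℝ) by ring] at h2
      linear_combination h2 - h1
  have hR1 : R 1 = R 0 := by
    have := hRper 0
    rwa [zero_add] at this
  set W : ℝ → ℂ := fun x => R x - R 0 with hWdef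
  have hWadd : ∀ x y : ℝ, W (x + y) = W x + W y := by
    intro x y
    simp only [hWdef]
    linear_combination hRadd x y
  have hWnat : ∀ (n : ℕ) (x : ℝ), W ((n : ℝ) * x) = (n : ℂ) * W x := by
    intro n
    induction n with
    | zero => intro x; simp only [hWdef]; norm_num
    | succ k ihk =>
      intro x
      have : ((k:ℝ) + 1) * x = (k:ℝ) * x + x := by ring
      push_cast
      rw [this, hWadd, ihk]
      ring
  have hW0 : W 0 = 0 := by simp only [hWdef]; ring
  have hWneg : ∀ x : ℝ, W (-x) = -W x := by
    intro x
    have := hWadd x (-x)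
    rw [show x + -x = (0:ℝ) by ring, hW0] at this
    linear_combination -this
  have hW1 : W 1 = 0 := by simp only [hWdef]; rw [hR1]; ring
  have hWnat1 : ∀ n : ℕ, W (n : ℝ) = 0 := by
    intro n
    have := hWnat n 1
    rw [mul_one] at this
    rw [this, hW1, mul_zero]
  have hWint : ∀ m : ℤ, W (m : ℝ) = 0 := by
    intro m
    rcases m with n | n
    · exact_mod_cast hWnat1 n
    · have : ((Int.negSucc n : ℤ) : ℝ) = -((n+1 : ℕ) : ℝ) := by push_cast; ring
      rw [this, hWneg, hWnat1, neg_zero]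
  have hWrat : ∀ r : ℚ, W (r : ℝ) = 0 := by
    intro r
    have hden : ((r.den : ℝ)) * (r : ℝ) = ((r.num : ℝ)) := by
      rw [Rat.cast_def]
      field_simp
    have h1 := hWnat r.den (r : ℝ)
    rw [hden] at h1
    have h2 : W ((r.num : ℝ)) = 0 := hWint r.num
    rw [h2] at h1
    have hdne : ((r.den : ℂ)) ≠ 0 := by
      exact Nat.cast_ne_zero.mpr r.den_nz
    rcases mul_eq_zero.mp h1.symm with h | h
    · exact absurd h hdne
    · exact h
  have hWcont : Continuous W := hRcont.sub continuous_const
  have hWzero : ∀ x : ℝ, W x = 0 := by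
    have hclosed : IsClosed {x : ℝ | W x = 0} := isClosed_eq hWcont continuous_const
    have hsub : Set.range ((↑) : ℚ → ℝ) ⊆ {x : ℝ | W x = 0} := by
      rintro _ ⟨r, rfl⟩
      exact hWrat r
    have hcl := closure_minimal hsub hclosed
    intro x
    exact hcl (Rat.denseRange_cast x)
  have hGq : ∀ x : ℝ, G x = q.eval (x : ℂ) + R 0 := by
    intro x
    have := hWzero x
    simp only [hWdef, hRdef] at this
    linear_combination this
  refine ⟨-q, q + T₀, ?_, ?_, ?_⟩
  · rw [natDegree_neg]; exact hqdeg
  · exact le_trans (natDegree_add_le _ _) (max_le hqdeg (le_trans hT₀deg (Nat.le_succ ℓ)))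
  · intro a b hab
    have h1 := hGψ a b hab
    have h2 := hf b
    have h3 := hGq b
    have h4 := hGq a
    simp only [eval_neg, eval_add]
    linear_combination h1 + h2 + h3 - h4
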